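/- Let ω belong to the Bari–Stechkin class and let 𝓗 be either 𝓗^ω or 𝓗₀^ω. A function f ∈ 𝓗 is invertible in 𝓗 (i.e., there exists g ∈ 𝓗 with f(t)g(t) = 1 for all t ∈ 𝕋) if and only if f(t) ≠ 0 for all t ∈ 𝕋. -/

import Mathlib

open scoped Real
open Filter MeasureTheory

noncomputable section

/-- Modulus of continuity of `f : ℝ → ℂ` (viewed as a `2π`-periodic function on the circle). -/
def mc (f : ℝ → ℂ) (x : ℝ) : ℝ :=
  sSup {r : ℝ | ∃ h y : ℝ, |h| ≤ x ∧ r = ‖f (y + h) - f y‖}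

/-- The Bari–Stechkin class. -/
def BariStechkin (w : ℝ → ℝ) : Prop :=
  (∃ A : ℝ, 0 < A ∧ ∀ x y : ℝ, 0 < x → x ≤ y → y ≤ π → w x ≤ A * w y) ∧
  (∀ x : ℝ, 0 < x → x ≤ π → 0 < w x) ∧
  Tendsto w (nhdsWithin 0 (Set.Ioi 0)) (nhds 0) ∧
  (∀ x : ℝ, 0 < x → x ≤ π → IntervalIntegrable (fun y => w y / y) volume 0 x) ∧
  (∃ B : ℝ, ∀ x : ℝ, 0 < x → x ≤ π → (∫ y in (0:ℝ)..x, w y / y) ≤ B * w x) ∧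
  (∀ x : ℝ, 0 < x → x ≤ π → IntervalIntegrable (fun y => w y / y ^ 2) volume x π) ∧
  (∃ B : ℝ, ∀ x : ℝ, 0 < x → x ≤ π → x * (∫ y in x..π, w y / y ^ 2) ≤ B * w x)

/-- Membership in the generalized Hölder space `𝓗^ω`. -/
def MemH (w : ℝ → ℝ) (f : ℝ → ℂ) : Prop :=
  Continuous f ∧ Function.Periodic f (2 * π) ∧
    ∃ C : ℝ, ∀ x : ℝ, 0 < x → x ≤ π → mc f x ≤ C * w x

/-- Membership in `𝓗₀^ω`. -/
def MemH0 (w : ℝ → ℝ) (f : ℝ → ℂ) : Prop :=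
  MemH w f ∧ Tendsto (fun x => mc f x / w x) (nhdsWithin 0 (Set.Ioi 0)) (nhds 0)

/-- The `k`-th Fourier coefficient of a function on the circle. -/
def fc (f : ℝ → ℂ) (k : ℤ) : ℂ :=
  (1 / (2 * (π : ℂ))) * ∫ θ in (0:ℝ)..(2 * π), f θ * Complex.exp (-(Complex.I * (k : ℂ) * (θ : ℂ)))

/-- Fourier coefficients of a matrix function, computed entrywise. -/
def Fc {N : ℕ} (a : ℝ → Matrix (Fin N) (Fin N) ℂ) (k : ℤ) : Matrix (Fin N) (Fin N) ℂ :=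
  Matrix.of fun α β => fc (fun θ => a θ α β) k

/-- `ã(t) := a(1/t)`, i.e. `θ ↦ a (−θ)`. -/
def tilde {N : ℕ} (a : ℝ → Matrix (Fin N) (Fin N) ℂ) : ℝ → Matrix (Fin N) (Fin N) ℂ :=
  fun θ => a (-θ)

/-- The Hilbert space `ℓ²(ℕ, ℂ^N)`. -/
abbrev HS (N : ℕ) : Type := lp (fun _ : ℕ => EuclideanSpace ℂ (Fin N)) 2

/-- The standard basis vectors of `ℓ²(ℕ, ℂ^N)`. -/
def ebasis (N : ℕ) (j : ℕ) (α : Fin N) : HS N :=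
  lp.single 2 j (EuclideanSpace.single α 1)

/-- `T` is the block Toeplitz operator with symbol `a`. -/
def IsToeplitz {N : ℕ} (a : ℝ → Matrix (Fin N) (Fin N) ℂ) (T : HS N →L[ℂ] HS N) : Prop :=
  ∀ (j k : ℕ) (α β : Fin N),
    (inner ℂ (ebasis N j α) (T (ebasis N k β)) : ℂ) = Fc a ((j : ℤ) - (k : ℤ)) α β

/-- `Ha` is the block Hankel operator with symbol `a`. -/
def IsHankel {N : ℕ} (a : ℝ → Matrix (Fin N) (Fin N) ℂ) (Ha : HS N →L[ℂ] HS N) : Prop :=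
  ∀ (j k : ℕ) (α β : Fin N),
    (inner ℂ (ebasis N j α) (Ha (ebasis N k β)) : ℂ) = Fc a ((j : ℤ) + (k : ℤ) + 1) α β

/-- Invertibility of the Toeplitz operator `T(a)` on `ℓ²(ℕ, ℂ^N)`. -/
def ToeplitzInvertible {N : ℕ} (a : ℝ → Matrix (Fin N) (Fin N) ℂ) : Prop :=
  ∃ T : HS N ≃L[ℂ] HS N, IsToeplitz a (T : HS N →L[ℂ] HS N)

/-- The finite block Toeplitz matrix `T_n(a)`. -/
def Tmat {N : ℕ} (a : ℝ → Matrix (Fin N) (Fin N) ℂ) (n : ℕ) :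
    Matrix (Fin (n + 1) × Fin N) (Fin (n + 1) × Fin N) ℂ :=
  Matrix.of fun p q => Fc a ((p.1 : ℤ) - (q.1 : ℤ)) p.2 q.2

/-- Matrix functions with entries in `𝓗^ω` and Fourier coefficients vanishing
at positive indices. -/
def MemHMinus (w : ℝ → ℝ) {N : ℕ} (u : ℝ → Matrix (Fin N) (Fin N) ℂ) : Prop :=
  (∀ α β, MemH w (fun θ => u θ α β)) ∧ ∀ k : ℤ, 0 < k → Fc u k = 0

/-- Matrix functions with entries in `𝓗^ω` and Fourier coefficients vanishing
at negative indices. -/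
def MemHPlus (w : ℝ → ℝ) {N : ℕ} (u : ℝ → Matrix (Fin N) (Fin N) ℂ) : Prop :=
  (∀ α β, MemH w (fun θ => u θ α β)) ∧ ∀ k : ℤ, k < 0 → Fc u k = 0

/-- Bounded measurable (`2π`-periodic) matrix functions: `L^∞_{N×N}`. -/
def MemLinf {N : ℕ} (v : ℝ → Matrix (Fin N) (Fin N) ℂ) : Prop :=
  (∀ α β, Measurable (fun θ => v θ α β)) ∧
  (∀ α β, Function.Periodic (fun θ => v θ α β) (2 * π)) ∧
  ∃ M : ℝ, ∀ θ α β, ‖v θ α β‖ ≤ M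

/-- `\overline{H^∞}_{N×N}`. -/
def MemHinfMinus {N : ℕ} (v : ℝ → Matrix (Fin N) (Fin N) ℂ) : Prop :=
  MemLinf v ∧ ∀ k : ℤ, 0 < k → Fc v k = 0

/-- `H^∞_{N×N}`. -/
def MemHinfPlus {N : ℕ} (v : ℝ → Matrix (Fin N) (Fin N) ℂ) : Prop :=
  MemLinf v ∧ ∀ k : ℤ, k < 0 → Fc v k = 0

/-- The projection `P_n` on `ℓ²(ℕ, ℂ^N)`. -/
def Pn (N n : ℕ) : HS N →L[ℂ] HS N :=
  ∑ j ∈ Finset.range (n + 1), ∑ α : Fin N,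
    (innerSL ℂ (ebasis N j α)).smulRight (ebasis N j α)

/-- The complementary projection `Q_n`. -/
def Qn (N n : ℕ) : HS N →L[ℂ] HS N := ContinuousLinearMap.id ℂ (HS N) - Pn N n

/-- `Δ_0 := P_0`, `Δ_j := P_j − P_{j−1}`. -/
def Dl (N j : ℕ) : HS N →L[ℂ] HS N := if j = 0 then Pn N 0 else Pn N j - Pn N (j - 1)

/-- The operator `F_{n,k}(b,c)`, built from given Toeplitz/Hankel operators. -/
def Fop {N : ℕ} (Tb Tc Hb Hct : HS N →L[ℂ] HS N) (n k : ℕ) : HS N →L[ℂ] HS N :=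
  (Pn N n) ∘L Tc ∘L (Qn N n) ∘L (((Qn N n) ∘L Hb ∘L Hct ∘L (Qn N n)) ^ k) ∘L
    (Qn N n) ∘L Tb ∘L (Pn N n)

/-- Trace of an operator supported on the range of `P_n`. -/
def trOp {N : ℕ} (A : HS N →L[ℂ] HS N) (n : ℕ) : ℂ :=
  ∑ j ∈ Finset.range (n + 1), ∑ α : Fin N, (inner ℂ (ebasis N j α) (A (ebasis N j α)) : ℂ)

/-- The `N×N` matrix `G_{ℓ,k}(b,c)`. -/
def Gmat {N : ℕ} (Tb Tc Hb Hct : HS N →L[ℂ] HS N) (l k : ℕ) : Matrix (Fin N) (Fin N) ℂ :=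
  Matrix.of fun α β =>
    (inner ℂ (ebasis N 0 α)
      (((Pn N 0) ∘L Tc ∘L (Qn N l) ∘L (((Qn N l) ∘L Hb ∘L Hct ∘L (Qn N l)) ^ k) ∘L
        (Qn N l) ∘L Tb ∘L (Pn N 0)) (ebasis N 0 β)) : ℂ)

/-- Sup-norm of a scalar function. -/
def supNorm (f : ℝ → ℂ) : ℝ := sSup {r : ℝ | ∃ θ : ℝ, r = ‖f θ‖}

/-- The Hölder seminorm `|f|_ω`. -/
def hSemi (w : ℝ → ℝ) (f : ℝ → ℂ) : ℝ :=
  sSup {r : ℝ | ∃ x : ℝ, 0 < x ∧ x ≤ π ∧ r = mc f x / w x}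

/-- `L^∞` norm of a matrix function: `N · max_{α,β} esssup |a_{αβ}|`. -/
def linfNorm {N : ℕ} (v : ℝ → Matrix (Fin N) (Fin N) ℂ) : ℝ :=
  N * sSup {r : ℝ | ∃ α β : Fin N, r = essSup (fun θ => ‖v θ α β‖) volume}

/-- `max_{α,β} ω(u_{αβ}, x)`. -/
def mcMax {N : ℕ} (u : ℝ → Matrix (Fin N) (Fin N) ℂ) (x : ℝ) : ℝ :=
  sSup {r : ℝ | ∃ α β : Fin N, r = mc (fun θ => u θ α β) x}

/-- The norm `max_{α,β} (‖·‖_∞ + |·|_ω)` on matrix Hölder functions. -/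
def hNormMat (w : ℝ → ℝ) {N : ℕ} (u : ℝ → Matrix (Fin N) (Fin N) ℂ) : ℝ :=
  sSup {r : ℝ | ∃ α β : Fin N,
    r = supNorm (fun θ => u θ α β) + hSemi w (fun θ => u θ α β)}

/-- Approximation numbers of a bounded operator on `ℓ²(ℕ, ℂ^N)`. -/
def sNum {N : ℕ} (A : HS N →L[ℂ] HS N) (n : ℕ) : ℝ :=
  sInf {r : ℝ | ∃ F : HS N →L[ℂ] HS N,
    Module.rank ℂ (LinearMap.range (F.toLinearMap)) ≤ (n : Cardinal) ∧ r = ‖A - F‖}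

/-- A continuous `2π`-periodic function is bounded. -/
lemma periodic_bound {f : ℝ → ℂ} (hc : Continuous f) (hp : Function.Periodic f (2 * π)) :
    ∃ M : ℝ, 0 ≤ M ∧ ∀ θ, ‖f θ‖ ≤ M := by
  obtain ⟨C, hC⟩ := (isCompact_Icc (a := (0:ℝ)) (b := 2 * π)).exists_bound_of_continuousOn
    hc.continuousOn
  refine ⟨max C 0, le_max_right _ _, fun θ => ?_⟩
  obtain ⟨y, hy, hfy⟩ := hp.exists_mem_Ico₀ Real.two_pi_pos θ
  calc ‖f θ‖ = ‖f y‖ := by rw [hfy]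
    _ ≤ C := hC y (Set.Ico_subset_Icc_self hy)
    _ ≤ max C 0 := le_max_left _ _

/-- A continuous nonvanishing `2π`-periodic function is bounded below. -/
lemma periodic_lower_bound {f : ℝ → ℂ} (hc : Continuous f) (hp : Function.Periodic f (2 * π))
    (hf : ∀ θ, f θ ≠ 0) : ∃ m : ℝ, 0 < m ∧ ∀ θ, m ≤ ‖f θ‖ := by
  obtain ⟨θ₀, hθ₀, hmin⟩ := (isCompact_Icc (a := (0:ℝ)) (b := 2 * π)).exists_isMinOn
    (Set.nonempty_Icc.2 (by positivity)) (continuous_norm.comp hc).continuousOn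
  refine ⟨‖f θ₀‖, by
    simpa [norm_pos_iff] using hf θ₀, fun θ => ?_⟩
  obtain ⟨y, hy, hfy⟩ := hp.exists_mem_Ico₀ Real.two_pi_pos θ
  rw [hfy]
  exact hmin (Set.Ico_subset_Icc_self hy)

lemma mc_bddAbove {f : ℝ → ℂ} {M : ℝ} (hM : ∀ θ, ‖f θ‖ ≤ M) (x : ℝ) :
    BddAbove {r : ℝ | ∃ h y : ℝ, |h| ≤ x ∧ r = ‖f (y + h) - f y‖} := by
  refine ⟨2 * M, fun r hr => ?_⟩
  obtain ⟨h, y, -, rfl⟩ := hr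
  calc ‖f (y + h) - f y‖ ≤ ‖f (y + h)‖ + ‖f y‖ :=
        norm_sub_le _ _
    _ ≤ 2 * M := by have := hM (y + h); have := hM y; linarith

lemma mc_nonneg {f : ℝ → ℂ} {M : ℝ} (hM : ∀ θ, ‖f θ‖ ≤ M) {x : ℝ}
    (hx : 0 ≤ x) : 0 ≤ mc f x := by
  have h0 : (0:ℝ) ∈ {r : ℝ | ∃ h y : ℝ, |h| ≤ x ∧ r = ‖f (y + h) - f y‖} :=
    ⟨0, 0, by simpa using hx, by simp⟩
  exact le_csSup (mc_bddAbove hM x) h0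

/-- Comparison of moduli of continuity under a pointwise difference bound. -/
lemma mc_le_mul {f g : ℝ → ℂ} {M c : ℝ} (hM : ∀ θ, ‖f θ‖ ≤ M) (hc : 0 ≤ c)
    (hpt : ∀ a b : ℝ, ‖g a - g b‖ ≤ c * ‖f a - f b‖) {x : ℝ}
    (hx : 0 ≤ x) : mc g x ≤ c * mc f x := by
  have hnn : 0 ≤ c * mc f x := mul_nonneg hc (mc_nonneg hM hx)
  refine Real.sSup_le (fun r hr => ?_) hnn
  obtain ⟨h, y, hh, rfl⟩ := hr
  calc ‖g (y + h) - g y‖ ≤ c * ‖f (y + h) - f y‖ := hpt _ _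
    _ ≤ c * mc f x :=
      mul_le_mul_of_nonneg_left (le_csSup (mc_bddAbove hM x) ⟨h, y, hh, rfl⟩) hc

/-- The key pointwise estimate for the inverse function. -/
lemma inv_diff_bound {f : ℝ → ℂ} {m : ℝ} (hm : 0 < m) (hlb : ∀ θ, m ≤ ‖f θ‖)
    (a b : ℝ) :
    ‖(f a)⁻¹ - (f b)⁻¹‖ ≤ (m ^ 2)⁻¹ * ‖f a - f b‖ := by
  have hfa : f a ≠ 0 := by
    intro h; have := hlb a; rw [h] at this; simp at this; linarith
  have hfb : f b ≠ 0 := by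
    intro h; have := hlb b; rw [h] at this; simp at this; linarith
  have key : (f a)⁻¹ - (f b)⁻¹ = (f b - f a) / (f a * f b) := by
    field_simp
  rw [key, norm_div, norm_mul]
  rw [div_le_iff₀ (mul_pos (norm_pos_iff.mpr hfa) (norm_pos_iff.mpr hfb))]
  have h1 : ‖f b - f a‖ = ‖f a - f b‖ := by
    rw [← norm_neg]; ring_nf
  rw [h1]
  have h2 : m ^ 2 ≤ ‖f a‖ * ‖f b‖ := by
    have := hlb a; have := hlb b
    calc m ^ 2 = m * m := sq m
      _ ≤ ‖f a‖ * ‖f b‖ := by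
          apply mul_le_mul (hlb a) (hlb b) (le_of_lt hm)
          exact norm_nonneg _
  calc ‖f a - f b‖ = (m ^ 2)⁻¹ * ‖f a - f b‖ * m ^ 2 := by
        field_simp
    _ ≤ (m ^ 2)⁻¹ * ‖f a - f b‖ * (‖f a‖ * ‖f b‖) :=
        mul_le_mul_of_nonneg_left h2 (by positivity)

/-- If `f ∈ 𝓗^ω` has no zeros then `f⁻¹ ∈ 𝓗^ω`. -/
lemma memH_inv {w : ℝ → ℝ} (hw : BariStechkin w) {f : ℝ → ℂ} (hf : MemH w f)
    (hnz : ∀ θ, f θ ≠ 0) : MemH w (fun θ => (f θ)⁻¹) := by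
  obtain ⟨hc, hp, C, hC⟩ := hf
  obtain ⟨M, hM0, hM⟩ := periodic_bound hc hp
  obtain ⟨m, hm, hlb⟩ := periodic_lower_bound hc hp hnz
  refine ⟨hc.inv₀ hnz, fun θ => by simp [hp θ], (m ^ 2)⁻¹ * C, fun x hx hxπ => ?_⟩
  calc mc (fun θ => (f θ)⁻¹) x ≤ (m ^ 2)⁻¹ * mc f x :=
        mc_le_mul hM (by positivity) (inv_diff_bound hm hlb) hx.le
    _ ≤ (m ^ 2)⁻¹ * (C * w x) :=
        mul_le_mul_of_nonneg_left (hC x hx hxπ) (by positivity)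
    _ = (m ^ 2)⁻¹ * C * w x := by ring

/-- In `𝓗^ω` and in `𝓗₀^ω`, a function is invertible iff it has no
zeros on the circle. -/
theorem stmt7 (w : ℝ → ℝ) (hw : BariStechkin w) (f : ℝ → ℂ) :
    (MemH w f →
      ((∃ g : ℝ → ℂ, MemH w g ∧ ∀ θ, f θ * g θ = 1) ↔ ∀ θ, f θ ≠ 0)) ∧
    (MemH0 w f →
      ((∃ g : ℝ → ℂ, MemH0 w g ∧ ∀ θ, f θ * g θ = 1) ↔ ∀ θ, f θ ≠ 0)) := by
  have easy : (∃ g : ℝ → ℂ, (∀ θ, f θ * g θ = 1)) → ∀ θ, f θ ≠ 0 := by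
    rintro ⟨g, hg⟩ θ h0
    have := hg θ
    rw [h0, zero_mul] at this
    exact one_ne_zero this.symm
  constructor
  · intro hf
    constructor
    · rintro ⟨g, _, hg⟩
      exact easy ⟨g, hg⟩
    · intro hnz
      exact ⟨fun θ => (f θ)⁻¹, memH_inv hw hf hnz, fun θ => mul_inv_cancel₀ (hnz θ)⟩
  · intro hf0
    constructor
    · rintro ⟨g, _, hg⟩
      exact easy ⟨g, hg⟩
    · intro hnz
      obtain ⟨hf, htend⟩ := hf0
      obtain ⟨hc, hp, C, hC⟩ := hf
      obtain ⟨M, hM0, hM⟩ := periodic_bound hc hp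
      obtain ⟨m, hm, hlb⟩ := periodic_lower_bound hc hp hnz
      refine ⟨fun θ => (f θ)⁻¹, ⟨memH_inv hw ⟨hc, hp, C, hC⟩ hnz, ?_⟩,
        fun θ => mul_inv_cancel₀ (hnz θ)⟩
      -- squeeze
      have hpos : ∀ᶠ x in nhdsWithin (0:ℝ) (Set.Ioi 0), 0 < x :=
        eventually_mem_nhdsWithin
      have hltπ : ∀ᶠ x in nhdsWithin (0:ℝ) (Set.Ioi 0), x < π :=
        (eventually_lt_nhds Real.pi_pos).filter_mono nhdsWithin_le_nhds
      have hub : ∀ᶠ x in nhdsWithin (0:ℝ) (Set.Ioi 0),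
          mc (fun θ => (f θ)⁻¹) x / w x ≤ (m ^ 2)⁻¹ * (mc f x / w x) := by
        filter_upwards [hpos, hltπ] with x hx hxπ
        have hwx : 0 < w x := hw.2.1 x hx hxπ.le
        rw [mul_div_assoc']
        exact div_le_div_of_nonneg_right
          (mc_le_mul hM (by positivity) (inv_diff_bound hm hlb) hx.le) hwx.le
      have hlb0 : ∀ᶠ x in nhdsWithin (0:ℝ) (Set.Ioi 0),
          (0:ℝ) ≤ mc (fun θ => (f θ)⁻¹) x / w x := by
        filter_upwards [hpos, hltπ] with x hx hxπ
        have hwx : 0 < w x := hw.2.1 x hx hxπ.le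
        have hMinv : ∀ θ, ‖(f θ)⁻¹‖ ≤ m⁻¹ := by
          intro θ
          rw [norm_inv]
          exact inv_anti₀ hm (hlb θ)
        exact div_nonneg (mc_nonneg hMinv hx.le) hwx.le
      have htend' : Tendsto (fun x => (m ^ 2)⁻¹ * (mc f x / w x))
          (nhdsWithin (0:ℝ) (Set.Ioi 0)) (nhds 0) := by
        have := htend.const_mul ((m ^ 2)⁻¹)
        simpa using this
      exact tendsto_of_tendsto_of_tendsto_of_le_of_le' tendsto_const_nhds htend' hlb0 hub

end
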